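/- Free-field (Feigin–Fuks type) realization of the NSR algebra: the operators L_n = (1/2) Σ_{k≠0,n} c_k c_{n-k} + (1/2) Σ_r (r - n/2) ψ_{n-r} ψ_r + (i/2)(Qn + 2P) c_n (for n ≠ 0), L_0 = Σ_{k>0} c_{-k} c_k + Σ_{r>0} r ψ_{-r} ψ_r + (1/2)(Q²/4 - P²), G_r = Σ_{n≠0} c_n ψ_{r-n} + i(Qr + P) ψ_r, acting on the Fock space of one free boson and one free NS fermion, satisfy the NSR relations with central charge c = 1 + 2Q². In particular, verify {G_{1/2}, G_{-1/2}} = 2 L_0 on the Fock space. -/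

import Mathlib

open scoped BigOperators

variable {V : Type*} [AddCommGroup V] [Module ℂ V]

/-- The free-field NSR supercurrent mode
`G_{a+1/2} = ∑_{n≠0} c_n ψ_{a+1/2-n} + i(Q(a+1/2) + P) ψ_{a+1/2}`, where
`ps m` denotes the fermion mode `ψ_{m+1/2}` and `cO n` the boson mode `c_n`. -/
noncomputable def Gop (cO ps : ℤ → V →ₗ[ℂ] V) (Q P : ℂ) (a : ℤ) (v : V) : V :=
  (∑ᶠ n : ℤ, if n = 0 then 0 else cO n (ps (a - n) v)) +
    (Complex.I * (Q * ((a : ℂ) + 1 / 2) + P)) • ps a v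

/-- The free-field NSR Virasoro zero mode
`L₀ = ∑_{k>0} c_{-k} c_k + ∑_{r>0} r ψ_{-r} ψ_r + (1/2)(Q²/4 - P²)`. -/
noncomputable def L0op (cO ps : ℤ → V →ₗ[ℂ] V) (Q P : ℂ) (v : V) : V :=
  (∑ᶠ k : ℤ, if 0 < k then cO (-k) (cO k v) else 0) +
    (∑ᶠ m : ℤ, if 0 ≤ m then ((m : ℂ) + 1 / 2) • ps (-m - 1) (ps m v) else 0) +
    (1 / 2 * (Q ^ 2 / 4 - P ^ 2)) • v

noncomputable def Sop (cO ps : ℤ → V →ₗ[ℂ] V) (a : ℤ) (v : V) : V :=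
  ∑ᶠ n : ℤ, if n = 0 then 0 else cO n (ps (a - n) v)

lemma exists_N (S : Set ℤ) (hS : S.Finite) (N₀ : ℤ) :
    ∃ N : ℤ, N₀ < N ∧ 1 ≤ N ∧ S ⊆ Set.Icc (-N) N := by
  obtain ⟨a, ha⟩ := hS.bddAbove
  obtain ⟨b, hb⟩ := hS.bddBelow
  refine ⟨max (N₀ + 1) (max 1 (max a (-b))), ?_, ?_, ?_⟩
  · have := le_max_left (N₀ + 1) (max 1 (max a (-b))); omega
  · have := le_max_right (N₀ + 1) (max 1 (max a (-b)))
    have := le_max_left 1 (max a (-b)); omega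
  · intro x hx
    have h1 : x ≤ a := ha hx
    have h2 : b ≤ x := hb hx
    have h3 : a ≤ max a (-b) := le_max_left _ _
    have h4 : -b ≤ max a (-b) := le_max_right _ _
    have h5 : max a (-b) ≤ max 1 (max a (-b)) := le_max_right _ _
    have h6 : max 1 (max a (-b)) ≤ max (N₀ + 1) (max 1 (max a (-b))) := le_max_right _ _
    simp only [Set.mem_Icc]
    omega

section FF

variable (cO ps : ℤ → V →ₗ[ℂ] V)

lemma Sop_add
    (hfinG : ∀ (a : ℤ) (v : V),
      (Function.support fun n : ℤ => if n = 0 then (0 : V) else cO n (ps (a - n) v)).Finite)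
    (a : ℤ) (u w : V) :
    Sop cO ps a (u + w) = Sop cO ps a u + Sop cO ps a w := by
  unfold Sop
  rw [← finsum_add_distrib (hfinG a u) (hfinG a w)]
  apply finsum_congr
  intro n
  split_ifs with h
  · simp
  · simp [map_add]

lemma Sop_smul
    (hfinG : ∀ (a : ℤ) (v : V),
      (Function.support fun n : ℤ => if n = 0 then (0 : V) else cO n (ps (a - n) v)).Finite)
    (a : ℤ) (c : ℂ) (w : V) :
    Sop cO ps a (c • w) = c • Sop cO ps a w := by
  unfold Sop
  rw [smul_finsum' c (hfinG a w)]
  apply finsum_congr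
  intro n
  split_ifs with h
  · simp
  · simp [map_smul]

lemma ps_Sop
    (hcp : ∀ (n r : ℤ) (v : V), cO n (ps r v) = ps r (cO n v))
    (hfinG : ∀ (a : ℤ) (v : V),
      (Function.support fun n : ℤ => if n = 0 then (0 : V) else cO n (ps (a - n) v)).Finite)
    (a b : ℤ) (v : V) :
    ps b (Sop cO ps a v) = ∑ᶠ n : ℤ, if n = 0 then 0 else cO n (ps b (ps (a - n) v)) := by
  unfold Sop
  rw [show ps b (∑ᶠ n : ℤ, if n = 0 then 0 else cO n (ps (a - n) v)) =
      ∑ᶠ n : ℤ, ps b (if n = 0 then 0 else cO n (ps (a - n) v)) from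
    AddMonoidHom.map_finsum (ps b).toAddMonoidHom (hfinG a v)]
  apply finsum_congr
  intro n
  split_ifs with h
  · simp
  · simp [hcp]

lemma mixed_zero
    (hpp : ∀ (r s : ℤ) (v : V),
      ps r (ps s v) + ps s (ps r v) = if r + s + 1 = 0 then v else 0)
    (hcp : ∀ (n r : ℤ) (v : V), cO n (ps r v) = ps r (cO n v))
    (hfinG : ∀ (a : ℤ) (v : V),
      (Function.support fun n : ℤ => if n = 0 then (0 : V) else cO n (ps (a - n) v)).Finite)
    (a b : ℤ) (h : ∀ n : ℤ, n ≠ 0 → a - n + b + 1 ≠ 0) (v : V) :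
    Sop cO ps a (ps b v) + ps b (Sop cO ps a v) = 0 := by
  rw [ps_Sop cO ps hcp hfinG]
  unfold Sop
  have hfin2 : (Function.support fun n : ℤ =>
      if n = 0 then (0 : V) else cO n (ps b (ps (a - n) v))).Finite := by
    apply (hfinG a v).subset
    intro n hn
    simp only [Function.mem_support] at hn ⊢
    intro hzero
    apply hn
    split_ifs at hzero ⊢ with h0
    · exact hzero
    · rw [hcp, hzero, map_zero]
  rw [← finsum_add_distrib (hfinG a (ps b v)) hfin2]
  apply finsum_eq_zero_of_forall_eq_zero
  intro n
  split_ifs with h0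
  · simp
  · rw [← map_add, hpp, if_neg (h n h0), map_zero]

end FF

lemma main_term (cO ps : ℤ → V →ₗ[ℂ] V)
    (hcc : ∀ (n m : ℤ), n ≠ 0 → m ≠ 0 → ∀ v : V,
      cO n (cO m v) - cO m (cO n v) = if n + m = 0 then (n : ℂ) • v else 0)
    (hpp : ∀ (r s : ℤ) (v : V),
      ps r (ps s v) + ps s (ps r v) = if r + s + 1 = 0 then v else 0)
    (hcp : ∀ (n r : ℤ) (v : V), cO n (ps r v) = ps r (cO n v))
    (hfinG : ∀ (a : ℤ) (v : V),
      (Function.support fun n : ℤ => if n = 0 then (0 : V) else cO n (ps (a - n) v)).Finite)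
    (hfinB : ∀ v : V,
      (Function.support fun k : ℤ => if 0 < k then cO (-k) (cO k v) else 0).Finite)
    (hfinF : ∀ v : V,
      (Function.support fun m : ℤ =>
        if 0 ≤ m then ((m : ℂ) + 1 / 2) • ps (-m - 1) (ps m v) else 0).Finite)
    (hann : ∀ v : V, ∃ N : ℤ, ∀ n : ℤ, N < n → cO n v = 0 ∧ ps n v = 0)
    (v : V) :
    Sop cO ps 0 (Sop cO ps (-1) v) + Sop cO ps (-1) (Sop cO ps 0 v) =
      (2 : ℂ) • (∑ᶠ k : ℤ, if 0 < k then cO (-k) (cO k v) else 0) +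
      (2 : ℂ) • (∑ᶠ m : ℤ, if 0 ≤ m then ((m : ℂ) + 1 / 2) • ps (-m - 1) (ps m v) else 0) := by
  classical
  obtain ⟨N₀, hN₀⟩ := hann v
  -- the six relevant supports
  set S1 : Set ℤ := Function.support fun m : ℤ => if m = 0 then (0 : V) else cO m (ps (-1 - m) v) with hS1
  set S2 : Set ℤ := Function.support fun m : ℤ => if m = 0 then (0 : V) else cO m (ps (0 - m) v) with hS2
  set S3 : Set ℤ := Function.support fun n : ℤ =>
    if n = 0 then (0 : V) else cO n (ps (0 - n) (Sop cO ps (-1) v)) with hS3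
  set S4 : Set ℤ := Function.support fun n : ℤ =>
    if n = 0 then (0 : V) else cO n (ps (-1 - n) (Sop cO ps 0 v)) with hS4
  set S5 : Set ℤ := Function.support fun k : ℤ => if 0 < k then cO (-k) (cO k v) else 0 with hS5
  set S6 : Set ℤ := Function.support fun m : ℤ =>
    if 0 ≤ m then ((m : ℂ) + 1 / 2) • ps (-m - 1) (ps m v) else 0 with hS6
  have hSfin : (S1 ∪ S2 ∪ S3 ∪ S4 ∪ S5 ∪ S6).Finite := by
    exact ((((((hfinG (-1) v).union (hfinG 0 v)).union (hfinG 0 (Sop cO ps (-1) v))).union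
      (hfinG (-1) (Sop cO ps 0 v))).union (hfinB v)).union (hfinF v))
  obtain ⟨N, hNN₀, hN1, hNS⟩ := exists_N _ hSfin N₀
  set u : Finset ℤ := Finset.Icc (-N) N with hu
  have hIcc : (u : Set ℤ) = Set.Icc (-N) N := Finset.coe_Icc _ _
  have hsub : ∀ T : Set ℤ, T ⊆ S1 ∪ S2 ∪ S3 ∪ S4 ∪ S5 ∪ S6 → T ⊆ (u : Set ℤ) := by
    intro T hT
    rw [hIcc]; exact fun x hx => hNS (hT hx)
  have hsub1 : S1 ⊆ (u : Set ℤ) := hsub _ (by intro x hx; left; left; left; left; left; exact hx)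
  have hsub2 : S2 ⊆ (u : Set ℤ) := hsub _ (by intro x hx; left; left; left; left; right; exact hx)
  have hsub3 : S3 ⊆ (u : Set ℤ) := hsub _ (by intro x hx; left; left; left; right; exact hx)
  have hsub4 : S4 ⊆ (u : Set ℤ) := hsub _ (by intro x hx; left; left; right; exact hx)
  have hsub5 : S5 ⊆ (u : Set ℤ) := hsub _ (by intro x hx; left; right; exact hx)
  have hsub6 : S6 ⊆ (u : Set ℤ) := hsub _ (by intro x hx; right; exact hx)
  -- expansions of the inner sums
  have e1 : Sop cO ps (-1) v = ∑ m ∈ u, if m = 0 then 0 else cO m (ps (-1 - m) v) :=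
    finsum_eq_finset_sum_of_support_subset _ hsub1
  have e2 : Sop cO ps 0 v = ∑ m ∈ u, if m = 0 then 0 else cO m (ps (0 - m) v) :=
    finsum_eq_finset_sum_of_support_subset _ hsub2
  rw [hS3] at hsub3
  rw [hS4] at hsub4
  rw [hS5] at hsub5
  rw [hS6] at hsub6
  -- the double-sum expansions
  have hF1 : ∀ n : ℤ, (if n = 0 then (0 : V) else cO n (ps (0 - n) (Sop cO ps (-1) v))) =
      ∑ m ∈ u, (if n = 0 ∨ m = 0 then (0 : V)
        else cO n (cO m (ps (0 - n) (ps (-1 - m) v)))) := by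
    intro n
    by_cases h0 : n = 0
    · simp [h0]
    · rw [if_neg h0, e1, map_sum, map_sum]
      apply Finset.sum_congr rfl
      intro m _
      by_cases hm : m = 0
      · simp [hm]
      · rw [if_neg hm, if_neg (by tauto), ← hcp m (0 - n)]
  have hF2 : ∀ n : ℤ, (if n = 0 then (0 : V) else cO n (ps (-1 - n) (Sop cO ps 0 v))) =
      ∑ m ∈ u, (if n = 0 ∨ m = 0 then (0 : V)
        else cO n (cO m (ps (-1 - n) (ps (0 - m) v)))) := by
    intro n
    by_cases h0 : n = 0
    · simp [h0]
    · rw [if_neg h0, e2, map_sum, map_sum]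
      apply Finset.sum_congr rfl
      intro m _
      by_cases hm : m = 0
      · simp [hm]
      · rw [if_neg hm, if_neg (by tauto), ← hcp m (-1 - n)]
  have eA : Sop cO ps 0 (Sop cO ps (-1) v) =
      ∑ n ∈ u, ∑ m ∈ u, (if n = 0 ∨ m = 0 then (0 : V)
        else cO n (cO m (ps (0 - n) (ps (-1 - m) v)))) := by
    rw [show Sop cO ps 0 (Sop cO ps (-1) v) =
        ∑ᶠ n : ℤ, (if n = 0 then (0 : V) else cO n (ps (0 - n) (Sop cO ps (-1) v))) from rfl]
    rw [finsum_eq_finset_sum_of_support_subset _ hsub3]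
    exact Finset.sum_congr rfl fun n _ => hF1 n
  have eB : Sop cO ps (-1) (Sop cO ps 0 v) =
      ∑ n ∈ u, ∑ m ∈ u, (if n = 0 ∨ m = 0 then (0 : V)
        else cO n (cO m (ps (-1 - n) (ps (0 - m) v)))) := by
    rw [show Sop cO ps (-1) (Sop cO ps 0 v) =
        ∑ᶠ n : ℤ, (if n = 0 then (0 : V) else cO n (ps (-1 - n) (Sop cO ps 0 v))) from rfl]
    rw [finsum_eq_finset_sum_of_support_subset _ hsub4]
    exact Finset.sum_congr rfl fun n _ => hF2 n
  -- pairwise combination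
  have pair : ∀ n m : ℤ,
      (if n = 0 ∨ m = 0 then (0 : V) else cO n (cO m (ps (0 - n) (ps (-1 - m) v)))) +
      (if m = 0 ∨ n = 0 then (0 : V) else cO m (cO n (ps (-1 - m) (ps (0 - n) v)))) =
      (if m = -n ∧ ¬ n = 0 then cO (-n) (cO n v) + (n : ℂ) • ps (-n) (ps (n - 1) v)
        else 0) := by
    intro n m
    by_cases h0 : n = 0
    · simp [h0]
    by_cases hm : m = 0
    · rw [if_pos (Or.inr hm), if_pos (Or.inl hm), if_neg (by rintro ⟨h1, h2⟩; omega)]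
      simp
    rw [if_neg (by tauto), if_neg (by tauto)]
    have hc := hcc n m h0 hm (ps (0 - n) (ps (-1 - m) v))
    rw [sub_eq_iff_eq_add] at hc
    rw [hc, add_assoc, ← map_add, ← map_add, hpp (0 - n) (-1 - m) v]
    by_cases hnm : n + m = 0
    · rw [if_pos hnm, if_pos (by omega), if_pos ⟨by omega, h0⟩]
      have hm' : m = -n := by omega
      subst hm'
      rw [show (0 : ℤ) - n = -n from by ring, show (-1 : ℤ) - -n = n - 1 from by ring]
      exact add_comm _ _
    · rw [if_neg hnm, if_neg (by omega), if_neg (by rintro ⟨h1, _⟩; omega)]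
      simp
  have eD : Sop cO ps 0 (Sop cO ps (-1) v) + Sop cO ps (-1) (Sop cO ps 0 v) =
      ∑ n ∈ u, (if n = 0 then 0
        else cO (-n) (cO n v) + (n : ℂ) • ps (-n) (ps (n - 1) v)) := by
    rw [eA, eB]
    rw [show (∑ n ∈ u, ∑ m ∈ u, (if n = 0 ∨ m = 0 then (0 : V)
        else cO n (cO m (ps (-1 - n) (ps (0 - m) v))))) =
      ∑ n ∈ u, ∑ m ∈ u, (if m = 0 ∨ n = 0 then (0 : V)
        else cO m (cO n (ps (-1 - m) (ps (0 - n) v)))) from Finset.sum_comm]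
    rw [← Finset.sum_add_distrib]
    apply Finset.sum_congr rfl
    intro n hn
    rw [← Finset.sum_add_distrib, Finset.sum_congr rfl fun m _ => pair n m]
    by_cases h0 : n = 0
    · simp [h0]
    · rw [if_neg h0]
      rw [Finset.sum_congr rfl fun m _ =>
        (by simp [h0] : (if m = -n ∧ ¬ n = 0 then
            cO (-n) (cO n v) + (n : ℂ) • ps (-n) (ps (n - 1) v) else 0) =
          (if m = -n then cO (-n) (cO n v) + (n : ℂ) • ps (-n) (ps (n - 1) v) else 0))]
      rw [Finset.sum_ite_eq' u (-n)
        (fun _ => cO (-n) (cO n v) + (n : ℂ) • ps (-n) (ps (n - 1) v))]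
      rw [if_pos]
      simp only [hu, Finset.mem_Icc] at hn ⊢
      omega
  -- convert RHS finsums to finite sums over explicit intervals
  have eB5 : (∑ᶠ k : ℤ, if 0 < k then cO (-k) (cO k v) else 0) =
      ∑ k ∈ Finset.Icc 1 N, cO (-k) (cO k v) := by
    rw [finsum_eq_finset_sum_of_support_subset _ hsub5, ← Finset.sum_filter]
    congr 1
    ext x
    simp only [hu, Finset.mem_filter, Finset.mem_Icc]
    omega
  have eF6 : (∑ᶠ m : ℤ, if 0 ≤ m then ((m : ℂ) + 1 / 2) • ps (-m - 1) (ps m v) else 0) =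
      ∑ m ∈ Finset.Icc 0 N, ((m : ℂ) + 1 / 2) • ps (-m - 1) (ps m v) := by
    rw [finsum_eq_finset_sum_of_support_subset _ hsub6, ← Finset.sum_filter]
    congr 1
    ext x
    simp only [hu, Finset.mem_filter, Finset.mem_Icc]
    omega
  rw [eD, eB5, eF6]
  have efil : u.filter (fun n => ¬ n = 0) = Finset.Icc (-N) (-1) ∪ Finset.Icc 1 N := by
    ext x
    simp only [hu, Finset.mem_filter, Finset.mem_Icc, Finset.mem_union]
    omega
  have hdis : Disjoint (Finset.Icc (-N) (-1)) (Finset.Icc 1 N) := by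
    rw [Finset.disjoint_left]
    intro x h1 h2
    simp only [Finset.mem_Icc] at h1 h2
    omega
  have eneg : ∑ n ∈ Finset.Icc (-N) (-1),
        (cO (-n) (cO n v) + (n : ℂ) • ps (-n) (ps (n - 1) v)) =
      ∑ n ∈ Finset.Icc 1 N,
        (cO (- -n) (cO (-n) v) + ((-n : ℤ) : ℂ) • ps (- -n) (ps (-n - 1) v)) := by
    rw [show Finset.Icc (-N) (-1) = (Finset.Icc 1 N).image (fun x : ℤ => -x) from ?_]
    · exact Finset.sum_image (by intro x _ y _ h; exact neg_inj.mp h)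
    · ext x
      simp only [Finset.mem_image, Finset.mem_Icc]
      constructor
      · intro hx; exact ⟨-x, by omega, by omega⟩
      · rintro ⟨a, ha, rfl⟩; omega
  have key : ∀ n ∈ Finset.Icc (1 : ℤ) N,
      (cO (- -n) (cO (-n) v) + ((-n : ℤ) : ℂ) • ps (- -n) (ps (-n - 1) v)) +
      (cO (-n) (cO n v) + (n : ℂ) • ps (-n) (ps (n - 1) v)) =
      (2 : ℂ) • cO (-n) (cO n v) +
        (((n - 1 : ℤ) : ℂ) + 1) • ps (-(n - 1) - 1) (ps (n - 1) v) +
        (n : ℂ) • ps (-n - 1) (ps n v) := by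
    intro n hn
    have hn1 : 1 ≤ n := (Finset.mem_Icc.mp hn).1
    simp only [neg_neg]
    have hb := hcc n (-n) (by omega) (by omega) v
    rw [if_pos (by omega), sub_eq_iff_eq_add] at hb
    rw [hb]
    have hf := hpp n (-n - 1) v
    rw [if_pos (by omega)] at hf
    have hf' : ps n (ps (-n - 1) v) = v - ps (-n - 1) (ps n v) := eq_sub_of_add_eq hf
    rw [hf', show -(n - 1) - 1 = -n from by ring]
    push_cast
    module
  calc ∑ n ∈ u, (if n = 0 then (0 : V)
        else cO (-n) (cO n v) + (n : ℂ) • ps (-n) (ps (n - 1) v))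
      = ∑ n ∈ u.filter (fun n => ¬ n = 0),
          (cO (-n) (cO n v) + (n : ℂ) • ps (-n) (ps (n - 1) v)) := by
        rw [Finset.sum_filter]
        apply Finset.sum_congr rfl
        intro n _
        by_cases h : n = 0 <;> simp [h]
    _ = ∑ n ∈ Finset.Icc (-N) (-1), (cO (-n) (cO n v) + (n : ℂ) • ps (-n) (ps (n - 1) v)) +
        ∑ n ∈ Finset.Icc 1 N, (cO (-n) (cO n v) + (n : ℂ) • ps (-n) (ps (n - 1) v)) := by
        rw [efil, Finset.sum_union hdis]
    _ = ∑ n ∈ Finset.Icc 1 N,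
          ((cO (- -n) (cO (-n) v) + ((-n : ℤ) : ℂ) • ps (- -n) (ps (-n - 1) v)) +
           (cO (-n) (cO n v) + (n : ℂ) • ps (-n) (ps (n - 1) v))) := by
        rw [eneg, ← Finset.sum_add_distrib]
    _ = ∑ n ∈ Finset.Icc 1 N,
          ((2 : ℂ) • cO (-n) (cO n v) +
            (((n - 1 : ℤ) : ℂ) + 1) • ps (-(n - 1) - 1) (ps (n - 1) v) +
            (n : ℂ) • ps (-n - 1) (ps n v)) := Finset.sum_congr rfl key
    _ = (∑ n ∈ Finset.Icc 1 N, (2 : ℂ) • cO (-n) (cO n v)) +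
        (∑ n ∈ Finset.Icc 1 N, (((n - 1 : ℤ) : ℂ) + 1) • ps (-(n - 1) - 1) (ps (n - 1) v)) +
        (∑ n ∈ Finset.Icc 1 N, (n : ℂ) • ps (-n - 1) (ps n v)) := by
        rw [Finset.sum_add_distrib, Finset.sum_add_distrib]
    _ = (2 : ℂ) • (∑ k ∈ Finset.Icc 1 N, cO (-k) (cO k v)) +
        (2 : ℂ) • (∑ m ∈ Finset.Icc 0 N, ((m : ℂ) + 1 / 2) • ps (-m - 1) (ps m v)) := by
        have esh : ∑ n ∈ Finset.Icc (1 : ℤ) N,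
              (((n - 1 : ℤ) : ℂ) + 1) • ps (-(n - 1) - 1) (ps (n - 1) v) =
            ∑ m ∈ Finset.Icc (0 : ℤ) (N - 1), ((m : ℂ) + 1) • ps (-m - 1) (ps m v) := by
          refine Finset.sum_bij' (fun n _ => n - 1) (fun m _ => m + 1) ?_ ?_ ?_ ?_ ?_
          · intro a ha; simp only [Finset.mem_Icc] at ha ⊢; omega
          · intro a ha; simp only [Finset.mem_Icc] at ha ⊢; omega
          · intro a ha; change a - 1 + 1 = a; omega
          · intro a ha; change a + 1 - 1 = a; omega
          · intro a ha; rfl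
        have eext1 : ∑ m ∈ Finset.Icc (0 : ℤ) (N - 1), ((m : ℂ) + 1) • ps (-m - 1) (ps m v) =
            ∑ m ∈ Finset.Icc (0 : ℤ) N, ((m : ℂ) + 1) • ps (-m - 1) (ps m v) := by
          refine Finset.sum_subset (Finset.Icc_subset_Icc le_rfl (by omega)) ?_
          intro x hx hnx
          have hxN : x = N := by simp only [Finset.mem_Icc] at hx hnx; omega
          rw [hxN, (hN₀ N (by omega)).2, map_zero, smul_zero]
        have eext2 : ∑ n ∈ Finset.Icc (1 : ℤ) N, (n : ℂ) • ps (-n - 1) (ps n v) =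
            ∑ n ∈ Finset.Icc (0 : ℤ) N, (n : ℂ) • ps (-n - 1) (ps n v) := by
          refine Finset.sum_subset (Finset.Icc_subset_Icc (by omega) le_rfl) ?_
          intro x hx hnx
          have hx0 : x = 0 := by simp only [Finset.mem_Icc] at hx hnx; omega
          subst hx0
          simp
        rw [esh, eext1, eext2, add_assoc, ← Finset.sum_add_distrib]
        congr 1
        · exact (Finset.smul_sum).symm
        · rw [Finset.smul_sum]
          apply Finset.sum_congr rfl
          intro m _
          module

/-- Free-field (Feigin–Fuks type) realization of the NSR algebra: on a space with
free boson modes `cO n = c_n` (`[c_n, c_m] = n δ_{n+m}`), free NS fermion modes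
`ps m = ψ_{m+1/2}` (`{ψ_r, ψ_s} = δ_{r+s}`), commuting with each other, on which all
relevant sums are pointwise finite and all sufficiently positive modes annihilate
every vector, the operators `G_r`, `L₀` defined by the free-field formulas satisfy
`{G_{1/2}, G_{-1/2}} = 2 L₀`. -/
theorem free_field_GG_eq_two_L0 (cO ps : ℤ → V →ₗ[ℂ] V) (Q P : ℂ)
    (hcc : ∀ (n m : ℤ), n ≠ 0 → m ≠ 0 → ∀ v : V,
      cO n (cO m v) - cO m (cO n v) = if n + m = 0 then (n : ℂ) • v else 0)
    (hpp : ∀ (r s : ℤ) (v : V),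
      ps r (ps s v) + ps s (ps r v) = if r + s + 1 = 0 then v else 0)
    (hcp : ∀ (n r : ℤ) (v : V), cO n (ps r v) = ps r (cO n v))
    (hfinG : ∀ (a : ℤ) (v : V),
      (Function.support fun n : ℤ => if n = 0 then (0 : V) else cO n (ps (a - n) v)).Finite)
    (hfinB : ∀ v : V,
      (Function.support fun k : ℤ => if 0 < k then cO (-k) (cO k v) else 0).Finite)
    (hfinF : ∀ v : V,
      (Function.support fun m : ℤ =>
        if 0 ≤ m then ((m : ℂ) + 1 / 2) • ps (-m - 1) (ps m v) else 0).Finite)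
    (hann : ∀ v : V, ∃ N : ℤ, ∀ n : ℤ, N < n → cO n v = 0 ∧ ps n v = 0) :
    ∀ v : V,
      Gop cO ps Q P 0 (Gop cO ps Q P (-1) v) + Gop cO ps Q P (-1) (Gop cO ps Q P 0 v) =
        (2 : ℂ) • L0op cO ps Q P v := by
  intro v
  have hGa : ∀ (a : ℤ) (w : V), Gop cO ps Q P a w =
      Sop cO ps a w + (Complex.I * (Q * ((a : ℂ) + 1 / 2) + P)) • ps a w := fun a w => rfl
  have hL0 : L0op cO ps Q P v =
      (∑ᶠ k : ℤ, if 0 < k then cO (-k) (cO k v) else 0) +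
      (∑ᶠ m : ℤ, if 0 ≤ m then ((m : ℂ) + 1 / 2) • ps (-m - 1) (ps m v) else 0) +
      (1 / 2 * (Q ^ 2 / 4 - P ^ 2)) • v := rfl
  have hmain := main_term cO ps hcc hpp hcp hfinG hfinB hfinF hann v
  have hmix1 : Sop cO ps 0 (ps (-1) v) + ps (-1) (Sop cO ps 0 v) = 0 :=
    mixed_zero cO ps hpp hcp hfinG 0 (-1) (by intro n hn; omega) v
  have hmix2 : Sop cO ps (-1) (ps 0 v) + ps 0 (Sop cO ps (-1) v) = 0 :=
    mixed_zero cO ps hpp hcp hfinG (-1) 0 (by intro n hn; omega) v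
  have hferm : ps 0 (ps (-1) v) + ps (-1) (ps 0 v) = v := by
    have := hpp 0 (-1) v
    rwa [if_pos (by omega)] at this
  set α0 : ℂ := Complex.I * (Q * (((0 : ℤ) : ℂ) + 1 / 2) + P) with hα0
  set α1 : ℂ := Complex.I * (Q * (((-1 : ℤ) : ℂ) + 1 / 2) + P) with hα1
  have grouped : (Sop cO ps 0 (Sop cO ps (-1) v) + Sop cO ps (-1) (Sop cO ps 0 v)) +
      α1 • (Sop cO ps 0 (ps (-1) v) + ps (-1) (Sop cO ps 0 v)) +
      α0 • (Sop cO ps (-1) (ps 0 v) + ps 0 (Sop cO ps (-1) v)) +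
      (α0 * α1) • (ps 0 (ps (-1) v) + ps (-1) (ps 0 v)) =
      (2 : ℂ) • L0op cO ps Q P v := by
    rw [hmain, hmix1, hmix2, hferm, smul_zero, smul_zero, hL0]
    rw [add_zero, add_zero]
    have hαα : α0 * α1 = Q ^ 2 / 4 - P ^ 2 := by
      rw [hα0, hα1]
      push_cast
      ring_nf
      rw [Complex.I_sq]
      ring
    rw [hαα]
    match_scalars <;> ring
  rw [hGa, hGa, hGa, hGa, ← grouped]
  rw [Sop_add cO ps hfinG, Sop_smul cO ps hfinG, Sop_add cO ps hfinG, Sop_smul cO ps hfinG,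
    map_add, map_smul, map_add, map_smul]
  module
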